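/- Let Θ be a Hermitian form on the tensor product C^n ⊗ C^n, i.e. a sesquilinear form Q(τ⊗ξ, τ⊗ξ) that is real-valued on diagonal elements. Suppose Q(τ⊗ξ, τ⊗ξ) ≥ 0 whenever τ is orthogonal to ξ (with respect to the standard Hermitian inner product). Let μ := sup over unit vectors τ, ξ of |Q(τ⊗ξ, τ⊗ξ)|. Then for every w > 0 and all vectors τ, ξ ∈ C^n: Q(τ⊗ξ, τ⊗ξ) + (1/w²)|⟨τ,ξ⟩|² + 5μ√μ · w · ‖τ‖² ‖ξ‖² ≥ 0. -/

import Mathlib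

open scoped TensorProduct ComplexConjugate

noncomputable section

private lemma arith_key0 (s w t : ℝ) (hs : 0 ≤ s) (hw : 0 < w)
    (ht1 : t ≤ 1) :
    3 * s ^ 2 * t ≤ t ^ 2 / w ^ 2 + 5 * s ^ 3 * w := by
  have hw2 : (0:ℝ) < w ^ 2 := by positivity
  have hkey : 3 * s ^ 2 * t * w ^ 2 ≤ t ^ 2 + 5 * s ^ 3 * w ^ 3 := by
    rcases le_or_gt (s * w) (20 / 9) with h | h
    · have h2 : (9/4) * s ^ 4 * w ^ 4 ≤ 5 * s ^ 3 * w ^ 3 := by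
        nlinarith [mul_le_mul_of_nonneg_left h
          (show (0:ℝ) ≤ (9/4) * s ^ 3 * w ^ 3 by positivity)]
      nlinarith [sq_nonneg (t - 3/2 * s ^ 2 * w ^ 2)]
    · nlinarith [sq_nonneg t,
        mul_le_mul_of_nonneg_left ht1 (show (0:ℝ) ≤ 3 * s ^ 2 * w ^ 2 by positivity),
        mul_le_mul_of_nonneg_left h.le (show (0:ℝ) ≤ 5 * s ^ 2 * w ^ 2 by positivity)]
  have heq : t ^ 2 / w ^ 2 + 5 * s ^ 3 * w - 3 * s ^ 2 * t
      = (t ^ 2 + 5 * s ^ 3 * w ^ 3 - 3 * s ^ 2 * t * w ^ 2) / w ^ 2 := by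
    field_simp
  nlinarith [div_nonneg
    (show (0:ℝ) ≤ t ^ 2 + 5 * s ^ 3 * w ^ 3 - 3 * s ^ 2 * t * w ^ 2 by linarith) hw2.le, heq]

set_option maxHeartbeats 1000000

/-- curvature lemma for Hermitian forms on `ℂⁿ ⊗ ℂⁿ`. -/
theorem stmt0 (n : ℕ)
    (Q : TensorProduct ℂ (EuclideanSpace ℂ (Fin n)) (EuclideanSpace ℂ (Fin n)) →ₗ[ℂ]
         TensorProduct ℂ (EuclideanSpace ℂ (Fin n)) (EuclideanSpace ℂ (Fin n))
           →ₛₗ[starRingEnd ℂ] ℂ)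
    (hherm : ∀ x y, Q x y = conj (Q y x))
    (horth : ∀ τ ξ : EuclideanSpace ℂ (Fin n),
      (inner ℂ ξ τ : ℂ) = 0 → 0 ≤ (Q (τ ⊗ₜ[ℂ] ξ) (τ ⊗ₜ[ℂ] ξ)).re)
    (μ : ℝ)
    (hμ : IsLUB {r : ℝ | ∃ τ ξ : EuclideanSpace ℂ (Fin n), ‖τ‖ = 1 ∧ ‖ξ‖ = 1 ∧
      r = |(Q (τ ⊗ₜ[ℂ] ξ) (τ ⊗ₜ[ℂ] ξ)).re|} μ) :
    ∀ w : ℝ, 0 < w → ∀ τ ξ : EuclideanSpace ℂ (Fin n),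
      0 ≤ (Q (τ ⊗ₜ[ℂ] ξ) (τ ⊗ₜ[ℂ] ξ)).re + (1 / w ^ 2) * ‖(inner ℂ ξ τ : ℂ)‖ ^ 2
          + 5 * μ * Real.sqrt μ * w * ‖τ‖ ^ 2 * ‖ξ‖ ^ 2 := by
  classical
  -- dispose of the degenerate case `n = 0`, where the sup is over the empty set
  rcases Nat.eq_zero_or_pos n with hn | hn
  · exfalso
    have hempty : {r : ℝ | ∃ τ ξ : EuclideanSpace ℂ (Fin n), ‖τ‖ = 1 ∧ ‖ξ‖ = 1 ∧
        r = |(Q (τ ⊗ₜ[ℂ] ξ) (τ ⊗ₜ[ℂ] ξ)).re|} = ∅ := by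
      ext r
      simp only [Set.mem_setOf_eq, Set.mem_empty_iff_false, iff_false, not_exists]
      rintro τ ξ ⟨hτ, hξ, -⟩
      subst hn
      have h0 : ‖τ‖ = 0 := by simp [EuclideanSpace.norm_eq]
      rw [hτ] at h0; norm_num at h0
    rw [hempty] at hμ
    have hub : (μ - 1) ∈ upperBounds (∅ : Set ℝ) := by
      intro r hr; exact absurd hr (Set.notMem_empty r)
    have := hμ.2 hub
    linarith
  -- basic algebraic facts about Q
  have hreQsymm : ∀ x y, (Q y x).re = (Q x y).re := by
    intro x y; rw [hherm y x]; exact Complex.conj_re _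
  have hpol : ∀ x y, (Q (x + y) (x + y)).re
      = (Q x x).re + (Q y y).re + 2 * (Q x y).re := by
    intro x y
    have h1 : Q (x + y) (x + y) = Q x x + Q x y + Q y x + Q y y := by
      simp only [map_add, LinearMap.add_apply]; ring
    rw [h1]
    simp only [Complex.add_re]
    rw [hreQsymm x y]; ring
  have hsubpol : ∀ x y, (Q (x - y) (x - y)).re
      = (Q x x).re + (Q y y).re - 2 * (Q x y).re := by
    intro x y
    have h1 : Q (x - y) (x - y) = Q x x - Q x y - Q y x + Q y y := by
      simp only [map_sub, LinearMap.sub_apply]; ring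
    rw [h1]
    simp only [Complex.add_re, Complex.sub_re]
    rw [hreQsymm x y]; ring
  have hresmul : ∀ (c : ℂ) x, (Q (c • x) (c • x)).re = ‖c‖^2 * (Q x x).re := by
    intro c x
    have h1 : Q (c • x) (c • x) = c * (conj c * Q x x) := by
      calc Q (c • x) (c • x) = (c • Q x) (c • x) := by rw [LinearMap.map_smul]
        _ = c * (Q x (c • x)) := by rw [LinearMap.smul_apply, smul_eq_mul]
        _ = c * (conj c * Q x x) := by rw [(Q x).map_smulₛₗ, smul_eq_mul]
    have h2 : c * (conj c * Q x x) = ((‖c‖^2 : ℝ) : ℂ) * Q x x := by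
      rw [← mul_assoc, Complex.mul_conj]
      norm_cast
      simp [Complex.normSq_eq_norm_sq]
    rw [h1, h2, Complex.re_ofReal_mul]
  -- bound on unit decomposables
  have hS : ∀ τ ξ : EuclideanSpace ℂ (Fin n), ‖τ‖ = 1 → ‖ξ‖ = 1 →
      |(Q (τ ⊗ₜ[ℂ] ξ) (τ ⊗ₜ[ℂ] ξ)).re| ≤ μ := by
    intro τ ξ hτ hξ
    exact hμ.1 ⟨τ, ξ, hτ, hξ, rfl⟩
  have hμ0 : 0 ≤ μ := by
    have he : ‖EuclideanSpace.single (⟨0, hn⟩ : Fin n) (1:ℂ)‖ = 1 := by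
      simp [EuclideanSpace.norm_single]
    exact le_trans (abs_nonneg _) (hS _ _ he he)
  -- unitization of a nonzero vector
  have hunit : ∀ τ : EuclideanSpace ℂ (Fin n), τ ≠ 0 →
      ∃ τ' : EuclideanSpace ℂ (Fin n), ‖τ'‖ = 1 ∧ τ = ((‖τ‖ : ℝ) : ℂ) • τ' := by
    intro τ hτ
    have hc : ((‖τ‖ : ℝ) : ℂ) ≠ 0 := by
      exact_mod_cast Complex.ofReal_ne_zero.mpr (norm_ne_zero_iff.mpr hτ)
    refine ⟨((‖τ‖ : ℝ) : ℂ)⁻¹ • τ, ?_, ?_⟩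
    · rw [norm_smul, norm_inv, Complex.norm_real, norm_norm,
        inv_mul_cancel₀ (norm_ne_zero_iff.mpr hτ)]
    · rw [smul_inv_smul₀ hc]
  -- scaling of Q on decomposables
  have hscale : ∀ (c d : ℂ) (τ ξ : EuclideanSpace ℂ (Fin n)),
      (Q ((c • τ) ⊗ₜ[ℂ] (d • ξ)) ((c • τ) ⊗ₜ[ℂ] (d • ξ))).re
        = ‖c‖^2 * ‖d‖^2 * (Q (τ ⊗ₜ[ℂ] ξ) (τ ⊗ₜ[ℂ] ξ)).re := by
    intro c d τ ξ
    have h1 : (c • τ) ⊗ₜ[ℂ] (d • ξ) = (c * d) • (τ ⊗ₜ[ℂ] ξ) := by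
      rw [TensorProduct.tmul_smul, TensorProduct.smul_tmul', smul_smul, mul_comm d c]
      exact TensorProduct.smul_tmul' _ _ _
    rw [h1, hresmul, norm_mul]; ring
  -- global bound on decomposables
  have hbound : ∀ τ ξ : EuclideanSpace ℂ (Fin n),
      |(Q (τ ⊗ₜ[ℂ] ξ) (τ ⊗ₜ[ℂ] ξ)).re| ≤ μ * ‖τ‖^2 * ‖ξ‖^2 := by
    intro τ ξ
    rcases eq_or_ne τ 0 with rfl | hτ
    · simp [TensorProduct.zero_tmul]
    rcases eq_or_ne ξ 0 with rfl | hξ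
    · simp [TensorProduct.tmul_zero]
    obtain ⟨τ', hτ'1, hτ'⟩ := hunit τ hτ
    obtain ⟨ξ', hξ'1, hξ'⟩ := hunit ξ hξ
    have hval : (Q (τ ⊗ₜ[ℂ] ξ) (τ ⊗ₜ[ℂ] ξ)).re
        = ‖τ‖^2 * ‖ξ‖^2 * (Q (τ' ⊗ₜ[ℂ] ξ') (τ' ⊗ₜ[ℂ] ξ')).re := by
      conv_lhs => rw [hτ', hξ']
      rw [hscale, Complex.norm_real, Complex.norm_real, norm_norm, norm_norm]
    rw [hval, abs_mul, abs_of_nonneg (show (0:ℝ) ≤ ‖τ‖^2 * ‖ξ‖^2 by positivity)]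
    calc ‖τ‖^2 * ‖ξ‖^2 * |(Q (τ' ⊗ₜ[ℂ] ξ') (τ' ⊗ₜ[ℂ] ξ')).re|
        ≤ ‖τ‖^2 * ‖ξ‖^2 * μ :=
          mul_le_mul_of_nonneg_left (hS τ' ξ' hτ'1 hξ'1) (by positivity)
      _ = μ * ‖τ‖^2 * ‖ξ‖^2 := by ring
  -- cross-term bound, unit case
  have hcross1 : ∀ τ η : EuclideanSpace ℂ (Fin n), ‖τ‖ = 1 → ‖η‖ = 1 →
      (inner ℂ η τ : ℂ) = 0 → |(Q (τ ⊗ₜ[ℂ] τ) (τ ⊗ₜ[ℂ] η)).re| ≤ μ := by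
    intro τ η hτ hη hperp
    have hτη : (inner ℂ τ η : ℂ) = 0 := by
      rw [← inner_conj_symm, hperp, map_zero]
    have hadd : ‖τ + η‖^2 = 2 := by
      have h := norm_add_sq_eq_norm_sq_add_norm_sq_of_inner_eq_zero τ η hτη
      rw [hτ, hη] at h
      rw [sq, h]; norm_num
    have hsub2 : ‖τ - η‖^2 = 2 := by
      have hτη' : (inner ℂ τ (-η) : ℂ) = 0 := by rw [inner_neg_right, hτη, neg_zero]
      have h := norm_add_sq_eq_norm_sq_add_norm_sq_of_inner_eq_zero τ (-η) hτη'
      rw [norm_neg, hτ, hη] at h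
      rw [sub_eq_add_neg, sq, h]; norm_num
    have e1 : τ ⊗ₜ[ℂ] τ + τ ⊗ₜ[ℂ] η = τ ⊗ₜ[ℂ] (τ + η) :=
      (TensorProduct.tmul_add τ τ η).symm
    have e2 : τ ⊗ₜ[ℂ] τ - τ ⊗ₜ[ℂ] η = τ ⊗ₜ[ℂ] (τ - η) := by
      rw [TensorProduct.tmul_sub]
    have h4 : 4 * (Q (τ ⊗ₜ[ℂ] τ) (τ ⊗ₜ[ℂ] η)).re
        = (Q (τ ⊗ₜ[ℂ] (τ + η)) (τ ⊗ₜ[ℂ] (τ + η))).re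
          - (Q (τ ⊗ₜ[ℂ] (τ - η)) (τ ⊗ₜ[ℂ] (τ - η))).re := by
      rw [← e1, ← e2, hpol, hsubpol]; ring
    have b1 := hbound τ (τ + η)
    have b2 := hbound τ (τ - η)
    rw [hτ, hadd] at b1
    rw [hτ, hsub2] at b2
    norm_num at b1 b2
    rw [abs_le] at b1 b2 ⊢
    constructor <;> linarith [b1.1, b1.2, b2.1, b2.2]
  -- cross-term bound, general second factor
  have hcross : ∀ τ η : EuclideanSpace ℂ (Fin n), ‖τ‖ = 1 →
      (inner ℂ η τ : ℂ) = 0 → |(Q (τ ⊗ₜ[ℂ] τ) (τ ⊗ₜ[ℂ] η)).re| ≤ μ * ‖η‖ := by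
    intro τ η hτ hperp
    rcases eq_or_ne η 0 with rfl | hη
    · simp [TensorProduct.tmul_zero]
    obtain ⟨η', hη'1, hη'⟩ := hunit η hη
    have hperp' : (inner ℂ η' τ : ℂ) = 0 := by
      have hc : ((‖η‖ : ℝ) : ℂ) ≠ 0 :=
        Complex.ofReal_ne_zero.mpr (norm_ne_zero_iff.mpr hη)
      have : (inner ℂ (((‖η‖ : ℝ) : ℂ) • η') τ : ℂ) = 0 := by rw [← hη']; exact hperp
      rw [inner_smul_left, Complex.conj_ofReal] at this
      exact (mul_eq_zero.mp this).resolve_left hc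
    have hQ : Q (τ ⊗ₜ[ℂ] τ) (τ ⊗ₜ[ℂ] η)
        = conj ((‖η‖ : ℝ) : ℂ) * Q (τ ⊗ₜ[ℂ] τ) (τ ⊗ₜ[ℂ] η') := by
      conv_lhs => rw [hη']
      rw [TensorProduct.tmul_smul, map_smulₛₗ, smul_eq_mul]
    rw [hQ, Complex.conj_ofReal, Complex.re_ofReal_mul, abs_mul, abs_norm]
    calc ‖η‖ * |(Q (τ ⊗ₜ[ℂ] τ) (τ ⊗ₜ[ℂ] η')).re|
        ≤ ‖η‖ * μ := mul_le_mul_of_nonneg_left (hcross1 τ η' hτ hη'1 hperp') (norm_nonneg η)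
      _ = μ * ‖η‖ := mul_comm _ _
  -- main estimate for unit vectors
  have hmain : ∀ τ ξ : EuclideanSpace ℂ (Fin n), ‖τ‖ = 1 → ‖ξ‖ = 1 →
      -(3 * μ * ‖(inner ℂ ξ τ : ℂ)‖) ≤ (Q (τ ⊗ₜ[ℂ] ξ) (τ ⊗ₜ[ℂ] ξ)).re := by
    intro τ ξ hτ hξ
    set a : ℂ := (inner ℂ ξ τ : ℂ) with ha
    set η : EuclideanSpace ℂ (Fin n) := ξ - (conj a) • τ with hηdef
    have hττ : (inner ℂ τ τ : ℂ) = 1 := by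
      rw [inner_self_eq_norm_sq_to_K, hτ]; norm_num
    have hperp : (inner ℂ η τ : ℂ) = 0 := by
      rw [hηdef, inner_sub_left, inner_smul_left, hττ, mul_one, ← ha]
      simp
    have hξdecomp : ξ = (conj a) • τ + η := by rw [hηdef]; abel
    have hnorms : ‖a‖^2 + ‖η‖^2 = 1 := by
      have hτη0 : (inner ℂ τ η : ℂ) = 0 := by rw [← inner_conj_symm, hperp, map_zero]
      have hτη : (inner ℂ ((conj a) • τ) η : ℂ) = 0 := by
        rw [inner_smul_left, hτη0, mul_zero]
      have hps := norm_add_sq_eq_norm_sq_add_norm_sq_of_inner_eq_zero _ _ hτη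
      rw [← hξdecomp, hξ] at hps
      have hna : ‖(conj a) • τ‖ = ‖a‖ := by
        rw [norm_smul, hτ, mul_one, RCLike.norm_conj]
      rw [hna] at hps
      nlinarith [hps]
    have ha1 : ‖a‖ ≤ 1 := by nlinarith [sq_nonneg ‖η‖, norm_nonneg a]
    have hη1 : ‖η‖ ≤ 1 := by nlinarith [sq_nonneg ‖a‖, norm_nonneg η]
    have hexp : τ ⊗ₜ[ℂ] ξ = (conj a) • (τ ⊗ₜ[ℂ] τ) + τ ⊗ₜ[ℂ] η := by
      conv_lhs => rw [hξdecomp]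
      rw [TensorProduct.tmul_add, TensorProduct.tmul_smul]
    have hQexp : (Q (τ ⊗ₜ[ℂ] ξ) (τ ⊗ₜ[ℂ] ξ)).re
        = ‖a‖^2 * (Q (τ ⊗ₜ[ℂ] τ) (τ ⊗ₜ[ℂ] τ)).re + (Q (τ ⊗ₜ[ℂ] η) (τ ⊗ₜ[ℂ] η)).re
          + 2 * (Q ((conj a) • (τ ⊗ₜ[ℂ] τ)) (τ ⊗ₜ[ℂ] η)).re := by
      rw [hexp, hpol, hresmul, RCLike.norm_conj]
    have hcrossterm : |(Q ((conj a) • (τ ⊗ₜ[ℂ] τ)) (τ ⊗ₜ[ℂ] η)).re| ≤ μ * ‖a‖ := by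
      have h1 : Q ((conj a) • (τ ⊗ₜ[ℂ] τ)) (τ ⊗ₜ[ℂ] η)
          = Q (τ ⊗ₜ[ℂ] τ) (τ ⊗ₜ[ℂ] (a • η)) := by
        rw [map_smul, LinearMap.smul_apply, smul_eq_mul,
          TensorProduct.tmul_smul, map_smulₛₗ, smul_eq_mul]
      rw [h1]
      have hperp2 : (inner ℂ (a • η) τ : ℂ) = 0 := by
        rw [inner_smul_left, hperp, mul_zero]
      have hb := hcross τ (a • η) hτ hperp2
      rw [norm_smul] at hb
      calc |(Q (τ ⊗ₜ[ℂ] τ) (τ ⊗ₜ[ℂ] (a • η))).re| ≤ μ * (‖a‖ * ‖η‖) := hb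
        _ ≤ μ * ‖a‖ := by
            nlinarith [mul_nonneg (mul_nonneg hμ0 (norm_nonneg a)) (sub_nonneg.mpr hη1)]
    have hΘττ := hbound τ τ
    rw [hτ] at hΘττ
    norm_num at hΘττ
    have hΘη : 0 ≤ (Q (τ ⊗ₜ[ℂ] η) (τ ⊗ₜ[ℂ] η)).re := horth τ η hperp
    rw [hQexp]
    rw [abs_le] at hcrossterm hΘττ
    have h5 : -(‖a‖^2 * μ) ≤ ‖a‖^2 * (Q (τ ⊗ₜ[ℂ] τ) (τ ⊗ₜ[ℂ] τ)).re := by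
      nlinarith [hΘττ.1, sq_nonneg ‖a‖]
    have h6 : ‖a‖^2 * μ ≤ μ * ‖a‖ := by nlinarith [norm_nonneg a]
    linarith [hcrossterm.1]
  -- final assembly
  intro w hw τ ξ
  have hw2 : (0:ℝ) < w ^ 2 := by positivity
  rcases eq_or_ne τ 0 with rfl | hτ
  · simp [TensorProduct.zero_tmul]
  rcases eq_or_ne ξ 0 with rfl | hξ
  · simp [TensorProduct.tmul_zero]
  obtain ⟨τ', hτ'1, hτ'⟩ := hunit τ hτ
  obtain ⟨ξ', hξ'1, hξ'⟩ := hunit ξ hξ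
  have hval : (Q (τ ⊗ₜ[ℂ] ξ) (τ ⊗ₜ[ℂ] ξ)).re
      = ‖τ‖^2 * ‖ξ‖^2 * (Q (τ' ⊗ₜ[ℂ] ξ') (τ' ⊗ₜ[ℂ] ξ')).re := by
    conv_lhs => rw [hτ', hξ']
    rw [hscale, Complex.norm_real, Complex.norm_real, norm_norm, norm_norm]
  have hinner : ‖(inner ℂ ξ τ : ℂ)‖ = ‖τ‖ * ‖ξ‖ * ‖(inner ℂ ξ' τ' : ℂ)‖ := by
    conv_lhs => rw [hτ', hξ']
    rw [inner_smul_left, inner_smul_right, Complex.conj_ofReal]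
    rw [norm_mul, norm_mul, Complex.norm_real, Complex.norm_real, norm_norm, norm_norm]
    ring
  set t : ℝ := ‖(inner ℂ ξ' τ' : ℂ)‖ with htdef
  have ht1 : t ≤ 1 := by
    have := norm_inner_le_norm (𝕜 := ℂ) ξ' τ'
    rw [hξ'1, hτ'1] at this; simpa using this
  have hsq : Real.sqrt μ ^ 2 = μ := Real.sq_sqrt hμ0
  have hcube : Real.sqrt μ ^ 3 = μ * Real.sqrt μ := by
    rw [pow_succ, hsq]
  have harith := arith_key0 (Real.sqrt μ) w t (Real.sqrt_nonneg μ) hw ht1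
  rw [hsq, hcube] at harith
  have hm := hmain τ' ξ' hτ'1 hξ'1
  have hunitcase : 0 ≤ (Q (τ' ⊗ₜ[ℂ] ξ') (τ' ⊗ₜ[ℂ] ξ')).re
      + (1 / w ^ 2) * t ^ 2 + 5 * μ * Real.sqrt μ * w := by
    have heq2 : t ^ 2 / w ^ 2 = (1 / w ^ 2) * t ^ 2 := by ring
    rw [heq2] at harith
    rw [← htdef] at hm
    linarith
  have hfin := mul_nonneg (show (0:ℝ) ≤ ‖τ‖^2 * ‖ξ‖^2 by positivity) hunitcase
  rw [hval, hinner]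
  nlinarith [hfin]
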